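/- If r is a maximal positive solution of r r'' = r² + 2(r')² + r²(r² + (r')²) on (a,b), then r(θ) → ∞ as θ → a⁺ and as θ → b⁻. -/

import Mathlib

/-- `r` (with derivatives `r'`, `r''`) is a positive solution of the ODE
`r r'' = r² + 2 r'² + r² (r² + r'²)` on the open interval `(a,b)`. -/
def SolOn (r r' r'' : ℝ → ℝ) (a b : ℝ) : Prop :=
  ∀ θ ∈ Set.Ioo a b, 0 < r θ ∧ HasDerivAt r (r' θ) θ ∧ HasDerivAt r' (r'' θ) θ ∧
    r θ * r'' θ = (r θ)^2 + 2 * (r' θ)^2 + (r θ)^2 * ((r θ)^2 + (r' θ)^2)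

/-- The solution on `(a,b)` is maximal: it admits no extension to a strictly
larger open interval. -/
def MaximalSolOn (r r' r'' : ℝ → ℝ) (a b : ℝ) : Prop :=
  SolOn r r' r'' a b ∧
    ∀ (a' b' : ℝ) (ρ ρ' ρ'' : ℝ → ℝ), a' ≤ a → b ≤ b' →
      (∀ θ ∈ Set.Ioo a b, ρ θ = r θ) → SolOn ρ ρ' ρ'' a' b' → a' = a ∧ b' = b

section Aux
open Set Filter Real Topology


noncomputable def Gf (x y : ℝ) : ℝ := x + 2*y^2/x + x^3 + x*y^2

noncomputable def Ff (p : ℝ × ℝ) : ℝ × ℝ := (p.2, Gf p.1 p.2)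

lemma Gf_mul {x y : ℝ} (hx : x ≠ 0) : x * Gf x y = x^2 + 2*y^2 + x^2*(x^2+y^2) := by
  simp only [Gf]; field_simp; ring

lemma Gf_pos {x y : ℝ} (hx : 0 < x) : 0 < Gf x y := by
  have h1 : 0 ≤ 2*y^2/x := by positivity
  have : 0 < x + x^3 + x*y^2 := by positivity
  unfold Gf; linarith

lemma contDiffAt_Gf {x y : ℝ} (hx : x ≠ 0) :
    ContDiffAt ℝ 1 (fun p : ℝ × ℝ => Gf p.1 p.2) (x, y) := by
  apply ContDiffAt.add
  apply ContDiffAt.add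
  apply ContDiffAt.add
  · exact contDiffAt_fst
  · exact ((contDiffAt_const.mul (contDiffAt_snd.pow 2)).div contDiffAt_fst hx)
  · exact contDiffAt_fst.pow 3
  · exact contDiffAt_fst.mul (contDiffAt_snd.pow 2)

lemma contDiffAt_Ff {x y : ℝ} (hx : x ≠ 0) : ContDiffAt ℝ 1 Ff (x, y) :=
  contDiffAt_snd.prodMk (contDiffAt_Gf hx)

lemma energy_deriv {r r' r'' : ℝ → ℝ} {a b : ℝ} (hsol : SolOn r r' r'' a b)
    {θ : ℝ} (hθ : θ ∈ Ioo a b) :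
    HasDerivAt (fun t => ((r' t)^2 + (r t)^2) * Real.exp (-(r t)^2) / (r t)^4) 0 θ := by
  obtain ⟨hpos, hr, hr', hode⟩ := hsol θ hθ
  have h1 : HasDerivAt (fun t => (r' t)^2 + (r t)^2)
      (2 * r' θ ^ 1 * r'' θ + 2 * r θ ^ 1 * r' θ) θ := (hr'.pow 2).add (hr.pow 2)
  have h2 : HasDerivAt (fun t => Real.exp (-(r t)^2))
      (Real.exp (-(r θ)^2) * (-(2 * r θ ^ 1 * r' θ))) θ := ((hr.pow 2).neg).exp
  have h3 := h1.mul h2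
  have h4 : HasDerivAt (fun t => (r t)^4) (4 * r θ ^ 3 * r' θ) θ := hr.pow 4
  have h5 := h3.div h4 (by positivity)
  refine HasDerivAt.congr_deriv h5 (Eq.symm ?_)
  rw [eq_comm, div_eq_zero_iff]
  left
  simp only [Pi.mul_apply]
  have e := Real.exp_pos (-(r θ)^2)
  linear_combination (2 * r' θ * (r θ)^3 * Real.exp (-(r θ)^2)) * hode

lemma energy_const {r r' r'' : ℝ → ℝ} {a b : ℝ} (hsol : SolOn r r' r'' a b) (hab : a < b) :
    ∃ C > 0, ∀ θ ∈ Ioo a b, (r' θ)^2 + (r θ)^2 = C * (r θ)^4 * Real.exp ((r θ)^2) := by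
  set E : ℝ → ℝ := fun t => ((r' t)^2 + (r t)^2) * Real.exp (-(r t)^2) / (r t)^4 with hE
  set θ₀ : ℝ := (a+b)/2 with hθ₀
  have hθ₀m : θ₀ ∈ Ioo a b := ⟨by simp [hθ₀]; linarith, by simp [hθ₀]; linarith⟩
  have hconst : ∀ θ ∈ Ioo a b, E θ = E θ₀ := by
    have key : ∀ x ∈ Ioo a b, ∀ y ∈ Ioo a b, x ≤ y → E y = E x := by
      intro x hx y hy hxy
      have hsub : Icc x y ⊆ Ioo a b := Icc_subset_Ioo hx.1 hy.2
      have := constant_of_has_deriv_right_zero (f := E) (a := x) (b := y)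
        (fun t ht => (energy_deriv hsol (hsub ht)).continuousAt.continuousWithinAt)
        (fun t ht => (energy_deriv hsol (hsub (Ico_subset_Icc_self ht))).hasDerivWithinAt)
      exact this y (right_mem_Icc.2 hxy)
    intro θ hθ
    rcases le_total θ θ₀ with h | h
    · exact (key θ hθ θ₀ hθ₀m h).symm
    · exact key θ₀ hθ₀m θ hθ h
  obtain ⟨hp0, -, -, -⟩ := hsol θ₀ hθ₀m
  refine ⟨E θ₀, by positivity, fun θ hθ => ?_⟩
  obtain ⟨hp, -, -, -⟩ := hsol θ hθ
  have h := hconst θ hθ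
  have hexp := Real.exp_pos ((r θ)^2)
  have hne : Real.exp (-(r θ)^2) = (Real.exp ((r θ)^2))⁻¹ := by
    rw [Real.exp_neg]
  rw [hE] at h
  simp only at h
  have h0 : (r θ₀)^4 ≠ 0 := by positivity
  have h4 : (r θ)^4 ≠ 0 := by positivity
  rw [div_eq_div_iff h4 h0] at h
  rw [div_mul_eq_mul_div, div_mul_eq_mul_div, eq_div_iff h0]
  have hmul : Real.exp (-(r θ)^2) * Real.exp ((r θ)^2) = 1 := by
    rw [← Real.exp_add]; simp
  linear_combination Real.exp ((r θ)^2) * h - ((r' θ)^2 + (r θ)^2) * (r θ₀)^4 * hmul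

lemma lower_bound {r r' r'' : ℝ → ℝ} {a b : ℝ} {C : ℝ} (hC : 0 < C)
    (hsol : SolOn r r' r'' a b)
    (hen : ∀ θ ∈ Ioo a b, (r' θ)^2 + (r θ)^2 = C * (r θ)^4 * Real.exp ((r θ)^2)) :
    ∃ m > 0, ∀ θ ∈ Ioo a b, m ≤ r θ := by
  refine ⟨min 1 (Real.sqrt (1/(C * Real.exp 1))), lt_min one_pos (Real.sqrt_pos.2 (by positivity)), ?_⟩
  intro θ hθ
  by_contra hlt
  push_neg at hlt
  obtain ⟨hp, -, -, -⟩ := hsol θ hθ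
  have h := hen θ hθ
  have h1 : (r θ)^2 ≤ C * (r θ)^4 * Real.exp ((r θ)^2) := by nlinarith [sq_nonneg (r' θ)]
  have hr1 : r θ < 1 := lt_of_lt_of_le hlt (min_le_left _ _)
  have hexp : Real.exp ((r θ)^2) ≤ Real.exp 1 := by
    apply Real.exp_le_exp.2; nlinarith
  have h2 : 1 ≤ C * (r θ)^2 * Real.exp ((r θ)^2) := by
    have := mul_le_mul_of_nonneg_left h1 (by positivity : (0:ℝ) ≤ ((r θ)^2)⁻¹)
    have hne : (r θ)^2 ≠ 0 := by positivity
    calc (1:ℝ) = ((r θ)^2)⁻¹ * (r θ)^2 := by field_simp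
    _ ≤ ((r θ)^2)⁻¹ * (C * (r θ)^4 * Real.exp ((r θ)^2)) := this
    _ = C * (r θ)^2 * Real.exp ((r θ)^2) := by field_simp
  have hrs : r θ < Real.sqrt (1/(C * Real.exp 1)) := lt_of_lt_of_le hlt (min_le_right _ _)
  have hsq : (r θ)^2 < 1/(C * Real.exp 1) := by
    have := Real.sq_sqrt (le_of_lt (show (0:ℝ) < 1/(C*Real.exp 1) by positivity))
    nlinarith [Real.sqrt_nonneg (1/(C*Real.exp 1))]
  have : C * (r θ)^2 * Real.exp ((r θ)^2) < 1 := by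
    have hCe : 0 < C * Real.exp 1 := by positivity
    calc C * (r θ)^2 * Real.exp ((r θ)^2) ≤ C * (r θ)^2 * Real.exp 1 := by
          gcongr
    _ < C * (1/(C * Real.exp 1)) * Real.exp 1 := by
          gcongr
    _ = 1 := by field_simp
  linarith

lemma sol_r'' {r r' r'' : ℝ → ℝ} {a b : ℝ} (hsol : SolOn r r' r'' a b)
    {θ : ℝ} (hθ : θ ∈ Ioo a b) : r'' θ = Gf (r θ) (r' θ) := by
  obtain ⟨hp, -, -, hode⟩ := hsol θ hθ
  have := Gf_mul (x := r θ) (y := r' θ) hp.ne'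
  apply mul_left_cancel₀ hp.ne'
  rw [hode, this]

lemma strictMonoOn_r' {r r' r'' : ℝ → ℝ} {a b : ℝ} (hsol : SolOn r r' r'' a b) :
    StrictMonoOn r' (Ioo a b) := by
  apply strictMonoOn_of_deriv_pos (convex_Ioo a b)
    (fun θ hθ => (hsol θ hθ).2.2.1.continuousAt.continuousWithinAt)
  intro θ hθ
  rw [interior_Ioo] at hθ
  obtain ⟨hp, -, hr', hode⟩ := hsol θ hθ
  rw [hr'.deriv]
  nlinarith [sq_nonneg (r' θ), sq_nonneg (r θ), pow_pos hp 2, pow_pos hp 4]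

lemma strictMonoOn_r_aux {r r' r'' : ℝ → ℝ} {a b : ℝ} (hsol : SolOn r r' r'' a b)
    {c : ℝ} (hc : c ∈ Ico a b) (hpos : ∀ θ ∈ Ioo c b, 0 < r' θ) :
    StrictMonoOn r (Ioo c b) := by
  have hsub : Ioo c b ⊆ Ioo a b := Ioo_subset_Ioo hc.1 le_rfl
  apply strictMonoOn_of_deriv_pos (convex_Ioo c b)
    (fun θ hθ => (hsol θ (hsub hθ)).2.1.continuousAt.continuousWithinAt)
  intro θ hθ
  rw [interior_Ioo] at hθ
  rw [(hsol θ (hsub hθ)).2.1.deriv]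
  exact hpos θ hθ

lemma strictAntiOn_r_aux {r r' r'' : ℝ → ℝ} {a b : ℝ} (hsol : SolOn r r' r'' a b)
    (hneg : ∀ θ ∈ Ioo a b, r' θ < 0) :
    StrictAntiOn r (Ioo a b) := by
  apply strictAntiOn_of_deriv_neg (convex_Ioo a b)
    (fun θ hθ => (hsol θ hθ).2.1.continuousAt.continuousWithinAt)
  intro θ hθ
  rw [interior_Ioo] at hθ
  rw [(hsol θ hθ).2.1.deriv]
  exact hneg θ hθ

lemma tendsto_atTop_of_unbdd {r : ℝ → ℝ} {c b : ℝ} (hcb : c < b)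
    (hmono : MonotoneOn r (Ioo c b)) (hunbdd : ¬BddAbove (r '' Ioo c b)) :
    Tendsto r (𝓝[<] b) atTop := by
  rw [tendsto_atTop]
  intro M
  rw [not_bddAbove_iff] at hunbdd
  obtain ⟨y, ⟨θ, hθ, rfl⟩, hMy⟩ := hunbdd M
  filter_upwards [Ioo_mem_nhdsLT hθ.2] with w hw
  exact le_trans hMy.le (hmono hθ ⟨hθ.1.trans hw.1, hw.2⟩ hw.1.le)

lemma limits_exist {r r' r'' : ℝ → ℝ} {a b : ℝ} (hab : a < b)
    (hsol : SolOn r r' r'' a b) {C m : ℝ} (hC : 0 < C) (hm : 0 < m)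
    (hen : ∀ θ ∈ Ioo a b, (r' θ)^2 + (r θ)^2 = C * (r θ)^4 * Real.exp ((r θ)^2))
    (hlow : ∀ θ ∈ Ioo a b, m ≤ r θ)
    (hnot : ¬ Tendsto r (𝓝[<] b) atTop) :
    ∃ L l : ℝ, m ≤ L ∧ Tendsto r (𝓝[<] b) (𝓝 L) ∧ Tendsto r' (𝓝[<] b) (𝓝 l) := by
  have smono := strictMonoOn_r' hsol
  -- Step 1: get L
  have hL : ∃ L : ℝ, m ≤ L ∧ Tendsto r (𝓝[<] b) (𝓝 L) := by
    by_cases hcase : ∃ θ₂ ∈ Ioo a b, 0 ≤ r' θ₂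
    · obtain ⟨θ₂, hθ₂, hr'θ₂⟩ := hcase
      have hpos : ∀ θ ∈ Ioo θ₂ b, 0 < r' θ := fun θ hθ =>
        lt_of_le_of_lt hr'θ₂ (smono hθ₂ ⟨hθ₂.1.trans hθ.1, hθ.2⟩ hθ.1)
      have rmono := strictMonoOn_r_aux hsol ⟨hθ₂.1.le, hθ₂.2⟩ hpos
      have hbdd : BddAbove (r '' Ioo θ₂ b) := by
        by_contra hg
        exact hnot (tendsto_atTop_of_unbdd hθ₂.2 rmono.monotoneOn hg)
      have hne : (Ioo θ₂ b).Nonempty := nonempty_Ioo.2 hθ₂.2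
      refine ⟨sSup (r '' Ioo θ₂ b), ?_, rmono.monotoneOn.tendsto_nhdsWithin_Ioo_left hne hbdd⟩
      obtain ⟨t₀, ht₀⟩ := hne
      calc m ≤ r t₀ := hlow t₀ ⟨hθ₂.1.trans ht₀.1, ht₀.2⟩
      _ ≤ sSup (r '' Ioo θ₂ b) := le_csSup hbdd (mem_image_of_mem r ht₀)
    · push_neg at hcase
      have ranti := strictAntiOn_r_aux hsol hcase
      have hbdd : BddBelow (r '' Ioo a b) := ⟨m, fun y ⟨θ, hθ, hy⟩ => hy ▸ hlow θ hθ⟩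
      have hne : (Ioo a b).Nonempty := nonempty_Ioo.2 hab
      refine ⟨sInf (r '' Ioo a b), ?_, ranti.antitoneOn.tendsto_nhdsWithin_Ioo_left hne hbdd⟩
      exact le_csInf (hne.image r) (fun y ⟨θ, hθ, hy⟩ => hy ▸ hlow θ hθ)
  obtain ⟨L, hmL, hLt⟩ := hL
  -- Step 2: bound r near b, giving bound on r'
  have hev : ∀ᶠ θ in 𝓝[<] b, r θ ≤ L + 1 := by
    filter_upwards [hLt (eventually_le_nhds (by linarith : L < L + 1))] with θ h using h
  obtain ⟨c₁, hc₁b, hc₁⟩ := mem_nhdsLT_iff_exists_Ioo_subset.1 hev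
  -- work on Ioo c₂ b with c₂ ∈ [a, b)
  set c₂ : ℝ := max c₁ ((a+b)/2) with hc₂def
  have hc₂b : c₂ < b := max_lt hc₁b (by linarith)
  have hc₂a : a < c₂ := lt_of_lt_of_le (by linarith : a < (a+b)/2) (le_max_right _ _)
  have hsub : Ioo c₂ b ⊆ Ioo a b := Ioo_subset_Ioo hc₂a.le le_rfl
  have hsub1 : Ioo c₂ b ⊆ Ioo c₁ b := Ioo_subset_Ioo (le_max_left _ _) le_rfl
  set D : ℝ := C * (L+1)^4 * Real.exp ((L+1)^2) with hDdef
  have hL1 : 0 < L + 1 := by linarith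
  have hD : 0 < D := by rw [hDdef]; positivity
  have hbd : ∀ θ ∈ Ioo c₂ b, r' θ ≤ Real.sqrt D := by
    intro θ hθ
    have hrθ : r θ ≤ L + 1 := hc₁ (hsub1 hθ)
    have hpos : 0 < r θ := lt_of_lt_of_le hm (hlow θ (hsub hθ))
    have h := hen θ (hsub hθ)
    have hbound : C * (r θ)^4 * Real.exp ((r θ)^2) ≤ D := by
      rw [hDdef]
      gcongr <;> nlinarith
    have hsq : (r' θ)^2 ≤ D := by nlinarith [sq_nonneg (r θ)]
    nlinarith [Real.sq_sqrt hD.le, Real.sqrt_nonneg D]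
  have hbdd' : BddAbove (r' '' Ioo c₂ b) := ⟨Real.sqrt D, fun y ⟨θ, hθ, hy⟩ => hy ▸ hbd θ hθ⟩
  have hne : (Ioo c₂ b).Nonempty := nonempty_Ioo.2 hc₂b
  have hmono' : MonotoneOn r' (Ioo c₂ b) := (smono.mono hsub).monotoneOn
  exact ⟨L, sSup (r' '' Ioo c₂ b), hmL, hLt,
    hmono'.tendsto_nhdsWithin_Ioo_left hne hbdd'⟩

lemma tendsto_atTop_right {r r' r'' : ℝ → ℝ} {a b : ℝ} (hab : a < b)
    (hmax : MaximalSolOn r r' r'' a b) : Tendsto r (𝓝[<] b) atTop := by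
  obtain ⟨hsol, hmx⟩ := hmax
  by_contra hnot
  obtain ⟨C, hC, hen⟩ := energy_const hsol hab
  obtain ⟨m, hm, hlow⟩ := lower_bound hC hsol hen
  obtain ⟨L, l, hmL, hLt, hlt⟩ := limits_exist hab hsol hC hm hen hlow hnot
  have hL : 0 < L := lt_of_lt_of_le hm hmL
  have hpair : Tendsto (fun θ => (r θ, r' θ)) (𝓝[<] b) (𝓝 (L, l)) := hLt.prodMk_nhds hlt
  have hIoo_mem : Ioo a b ∈ 𝓝[<] b := Ioo_mem_nhdsLT hab
  have hr''t : Tendsto r'' (𝓝[<] b) (𝓝 (Gf L l)) := by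
    have hcont : ContinuousAt (fun p : ℝ × ℝ => Gf p.1 p.2) (L, l) :=
      (contDiffAt_Gf hL.ne').continuousAt
    refine (hcont.tendsto.comp hpair).congr' ?_
    filter_upwards [hIoo_mem] with θ hθ
    exact (sol_r'' hsol hθ).symm
  -- local solution through (L,l) at time b
  obtain ⟨σ, hσb, ε, hε, hσ⟩ := (contDiffAt_Ff (x := L) (y := l) hL.ne').exists_forall_mem_closedBall_exists_eq_forall_mem_Ioo_hasDerivAt₀ b
  -- Lipschitz neighborhood
  obtain ⟨K, s, hs, hlipF⟩ := (contDiffAt_Ff (x := L) (y := l) hL.ne').exists_lipschitzOnWith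
  obtain ⟨δ, hδ, hballs⟩ := Metric.mem_nhds_iff.1 hs
  set s' : Set (ℝ × ℝ) := Metric.ball ((L : ℝ), l) (min δ L) with hs'def
  have hδ' : 0 < min δ L := lt_min hδ hL
  have hlip : LipschitzOnWith K Ff s' :=
    hlipF.mono ((Metric.ball_subset_ball (min_le_left _ _)).trans hballs)
  have hs'pos : ∀ p ∈ s', 0 < p.1 := by
    intro p hp
    have h1 : dist p.1 L ≤ dist p ((L : ℝ), l) := by
      rw [Prod.dist_eq]; exact le_max_left _ _
    have h2 : dist p ((L : ℝ), l) < min δ L := Metric.mem_ball.1 hp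
    have h3 : |p.1 - L| < L := by
      rw [← Real.dist_eq]
      exact lt_of_le_of_lt h1 (h2.trans_le (min_le_right _ _))
    have := (abs_lt.1 h3).1
    linarith
  have hcen : ((L : ℝ), l) ∈ s' := Metric.mem_ball_self hδ'
  -- σ stays in s' near b
  have hσcont : ContinuousAt σ b :=
    (hσ b ⟨by linarith, by linarith⟩).continuousAt
  have hσnear : ∀ᶠ t in 𝓝 b, σ t ∈ s' := by
    have : s' ∈ 𝓝 (σ b) := by rw [hσb]; exact Metric.ball_mem_nhds _ hδ'
    exact hσcont.preimage_mem_nhds this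
  obtain ⟨ε₀, hε₀, hballb⟩ := Metric.mem_nhds_iff.1 hσnear
  set ε₁ : ℝ := min ε ε₀ with hε₁def
  have hε₁ : 0 < ε₁ := lt_min hε hε₀
  -- (r,r') stays in s' near b on the left
  have hus' : ∀ᶠ θ in 𝓝[<] b, (r θ, r' θ) ∈ s' :=
    hpair (Metric.ball_mem_nhds _ hδ')
  obtain ⟨c, hcb, hc⟩ := mem_nhdsLT_iff_exists_Ioo_subset.1 (hus'.and hIoo_mem)
  set c₂ : ℝ := max c (max a (b - ε₁/2)) with hc₂def
  have hc₂b : c₂ < b := by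
    apply max_lt hcb (max_lt hab (by linarith))
  have hc₂prop : ∀ θ ∈ Ioo c₂ b, ((r θ, r' θ) ∈ s' ∧ θ ∈ Ioo a b) ∧ b - ε₁/2 < θ := by
    intro θ hθ
    refine ⟨hc ⟨lt_of_le_of_lt (le_max_left _ _) hθ.1, hθ.2⟩, ?_⟩
    exact lt_of_le_of_lt ((le_max_right _ _).trans (le_max_right _ _)) hθ.1
  set c₃ : ℝ := (c₂ + b)/2 with hc₃def
  have hc₃ : c₃ ∈ Ioo c₂ b := ⟨by rw [hc₃def]; linarith, by rw [hc₃def]; linarith⟩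
  have hc₂a : a ≤ c₂ := (le_max_left _ _).trans (le_max_right _ _)
  have hc₂ε : b - ε₁/2 ≤ c₂ := (le_max_right _ _).trans (le_max_right _ _)
  have hε₁ε : ε₁ ≤ ε := min_le_left _ _
  have hε₁ε₀ : ε₁ ≤ ε₀ := min_le_right _ _
  -- the glued function
  set u : ℝ → ℝ × ℝ := fun t => if t < b then (r t, r' t) else (L, l) with hudef
  have huIio : ∀ t : ℝ, t < b → u t = (r t, r' t) := fun t ht => if_pos ht
  have hub : u b = (L, l) := if_neg (lt_irrefl b)
  have huev : ∀ {t : ℝ}, t < b → u =ᶠ[𝓝 t] (fun w => (r w, r' w)) := by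
    intro t ht
    filter_upwards [Iio_mem_nhds ht] with w hw
    exact if_pos hw
  have hu_tendsto : Tendsto u (𝓝[<] b) (𝓝 (L, l)) := by
    apply hpair.congr'
    filter_upwards [self_mem_nhdsWithin] with w hw
    exact (huIio w hw).symm
  have huD : ∀ t ∈ Ioo c₂ b, HasDerivAt u (r' t, r'' t) t := by
    intro t ht
    have htab : t ∈ Ioo a b := ⟨lt_of_le_of_lt hc₂a ht.1, ht.2⟩
    obtain ⟨-, hdr, hdr', -⟩ := hsol t htab
    exact (hdr.prodMk hdr').congr_of_eventuallyEq (huev ht.2)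
  -- derivative of u at b from the left
  have hudb : HasDerivWithinAt u (l, Gf L l) (Iic b) b := by
    apply hasDerivWithinAt_Iic_of_tendsto_deriv (s := Ioo c₂ b)
    · intro t ht
      exact ((huD t ht).differentiableAt).differentiableWithinAt
    · have h1 : Tendsto u (𝓝[Ioo c₂ b] b) (𝓝 (L, l)) :=
        hu_tendsto.mono_left (nhdsWithin_mono b Ioo_subset_Iio_self)
      rw [ContinuousWithinAt, hub]
      exact h1
    · exact Ioo_mem_nhdsLT hc₂b
    · apply Tendsto.congr' _ (hlt.prodMk_nhds hr''t)
      filter_upwards [Ioo_mem_nhdsLT hc₂b] with t ht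
      exact ((huD t ht).deriv).symm
  have hcwb : ContinuousWithinAt u (Iic b) b := by
    rw [ContinuousWithinAt, hub, show Iic b = insert b (Iio b) by rw [Iio_insert],
      nhdsWithin_insert]
    exact Tendsto.sup (hub ▸ tendsto_pure_nhds u b) hu_tendsto
  -- uniqueness: u = σ on [c₃, b]
  have hueq : EqOn u σ (Icc c₃ b) := by
    apply ODE_solution_unique_of_mem_Icc_left (v := fun _ p => Ff p) (s := fun _ => s')
      (K := K) (fun _ _ => hlip)
    · -- ContinuousOn u
      intro t ht
      rcases lt_or_eq_of_le ht.2 with h | h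
      · exact ((huD t ⟨lt_of_lt_of_le hc₃.1 ht.1, h⟩).continuousAt).continuousWithinAt
      · subst h
        exact hcwb.mono Icc_subset_Iic_self
    · -- derivative of u
      intro t ht
      rcases lt_or_eq_of_le ht.2 with h | h
      · have htm : t ∈ Ioo c₂ b := ⟨lt_trans hc₃.1 ht.1, h⟩
        have htab : t ∈ Ioo a b := ⟨lt_of_le_of_lt hc₂a htm.1, h⟩
        have hFUt : Ff (u t) = (r' t, r'' t) := by
          rw [huIio t h]
          show ((r t, r' t).2, Gf (r t) (r' t)) = (r' t, r'' t)
          rw [← sol_r'' hsol htab]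
        rw [hFUt]
        exact (huD t htm).hasDerivWithinAt
      · subst h
        have : Ff (u t) = (l, Gf L l) := by rw [hub]; rfl
        rw [this]
        exact hudb
    · -- u stays in s'
      intro t ht
      rcases lt_or_eq_of_le ht.2 with h | h
      · rw [huIio t h]
        exact ((hc₂prop t ⟨lt_trans hc₃.1 ht.1, h⟩).1).1
      · subst h
        rw [hub]; exact hcen
    · -- ContinuousOn σ
      intro t ht
      have htm : t ∈ Ioo (b - ε) (b + ε) := by
        constructor
        · have : c₂ < t := lt_of_lt_of_le hc₃.1 ht.1
          linarith [hε₁.le]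
        · linarith [ht.2, hε]
      exact ((hσ t htm).continuousAt).continuousWithinAt
    · intro t ht
      have htm : t ∈ Ioo (b - ε) (b + ε) := by
        constructor
        · have : c₂ < t := lt_of_lt_of_le hc₃.1 ht.1.le
          linarith
        · linarith [ht.2, hε]
      exact (hσ t htm).hasDerivWithinAt
    · -- σ stays in s'
      intro t ht
      apply hballb
      have h1 : c₂ < t := lt_of_lt_of_le hc₃.1 ht.1.le
      have h2 : dist t b < ε₀ := by
        rw [Real.dist_eq, abs_lt]
        refine ⟨by linarith [ht.2, hε₀, hc₂ε, hε₁, hε₁ε₀], by linarith [ht.2, hε₀]⟩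
      exact Metric.mem_ball.2 h2
    · rw [hub, hσb]
  -- extension
  set ε₂ : ℝ := ε₁/2 with hε₂def
  set ρ : ℝ → ℝ := fun θ => if θ < b then r θ else (σ θ).1 with hρdef
  set P' : ℝ → ℝ := fun θ => if θ < b then r' θ else (σ θ).2 with hP'def
  set P'' : ℝ → ℝ := fun θ => if θ < b then r'' θ else Gf ((σ θ).1) ((σ θ).2) with hP''def
  have hρsol : SolOn ρ P' P'' a (b + ε₂) := by
    intro θ hθ
    by_cases hθb : θ < b
    · have hθab : θ ∈ Ioo a b := ⟨hθ.1, hθb⟩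
      obtain ⟨hp, hdr, hdr', hode⟩ := hsol θ hθab
      have e1 : ρ θ = r θ := if_pos hθb
      have e2 : P' θ = r' θ := if_pos hθb
      have e3 : P'' θ = r'' θ := if_pos hθb
      have ev1 : ρ =ᶠ[𝓝 θ] r := by
        filter_upwards [Iio_mem_nhds hθb] with w hw; exact if_pos hw
      have ev2 : P' =ᶠ[𝓝 θ] r' := by
        filter_upwards [Iio_mem_nhds hθb] with w hw; exact if_pos hw
      refine ⟨by rw [e1]; exact hp, ?_, ?_, ?_⟩
      · rw [e2]; exact hdr.congr_of_eventuallyEq ev1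
      · rw [e3]; exact hdr'.congr_of_eventuallyEq ev2
      · rw [e1, e2, e3]; exact hode
    · push_neg at hθb
      have hθ2 : θ < b + ε₂ := hθ.2
      have hθε : θ ∈ Ioo (b - ε) (b + ε) := by
        constructor <;> [linarith [hε₁]; linarith [hε₁ε]]
      have hθε₀ : σ θ ∈ s' := by
        apply hballb
        have : dist θ b < ε₀ := by
          rw [Real.dist_eq, abs_lt]
          constructor <;> [linarith; linarith]
        exact Metric.mem_ball.2 this
      have hσpos : 0 < (σ θ).1 := hs'pos _ hθε₀
      -- ρ, P' agree with σ components near θ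
      have hI : Ioo c₃ (b + ε) ∈ 𝓝 θ := Ioo_mem_nhds (lt_of_lt_of_le hc₃.2 hθb) (by linarith [hε₁ε])
      have ev1 : ρ =ᶠ[𝓝 θ] (fun w => (σ w).1) := by
        filter_upwards [hI] with w hw
        by_cases hwb : w < b
        · have : u w = σ w := hueq ⟨hw.1.le, hwb.le⟩
          rw [huIio w hwb] at this
          show ρ w = (σ w).1
          rw [hρdef]; simp only [if_pos hwb, ← this]
        · show ρ w = (σ w).1
          rw [hρdef]; simp only [if_neg hwb]
      have ev2 : P' =ᶠ[𝓝 θ] (fun w => (σ w).2) := by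
        filter_upwards [hI] with w hw
        by_cases hwb : w < b
        · have : u w = σ w := hueq ⟨hw.1.le, hwb.le⟩
          rw [huIio w hwb] at this
          show P' w = (σ w).2
          rw [hP'def]; simp only [if_pos hwb, ← this]
        · show P' w = (σ w).2
          rw [hP'def]; simp only [if_neg hwb]
      have hθb' : ¬ θ < b := not_lt.2 hθb
      have e1 : ρ θ = (σ θ).1 := if_neg hθb'
      have e2 : P' θ = (σ θ).2 := if_neg hθb'
      have e3 : P'' θ = Gf ((σ θ).1) ((σ θ).2) := if_neg hθb'
      have hσd := hσ θ hθε
      have hd1 : HasDerivAt (fun w => (σ w).1) ((σ θ).2) θ := by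
        have := ((ContinuousLinearMap.fst ℝ ℝ ℝ).hasFDerivAt).comp_hasDerivAt θ hσd
        exact this
      have hd2 : HasDerivAt (fun w => (σ w).2) (Gf ((σ θ).1) ((σ θ).2)) θ := by
        have := ((ContinuousLinearMap.snd ℝ ℝ ℝ).hasFDerivAt).comp_hasDerivAt θ hσd
        exact this
      refine ⟨by rw [e1]; exact hσpos, ?_, ?_, ?_⟩
      · rw [e2]; exact hd1.congr_of_eventuallyEq ev1
      · rw [e3]; exact hd2.congr_of_eventuallyEq ev2
      · rw [e1, e2, e3]
        exact Gf_mul hσpos.ne'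
  have hagree : ∀ θ ∈ Ioo a b, ρ θ = r θ := fun θ hθ => if_pos hθ.2
  obtain ⟨-, hb'⟩ := hmx a (b + ε₂) ρ P' P'' le_rfl (by linarith [hε₁]) hagree hρsol
  have : (0:ℝ) < ε₂ := by rw [hε₂def]; linarith
  linarith [hb'.ge, hb'.le]

lemma SolOn.reflect {r r' r'' : ℝ → ℝ} {a b : ℝ} (hsol : SolOn r r' r'' a b) :
    SolOn (fun θ => r (-θ)) (fun θ => -r' (-θ)) (fun θ => r'' (-θ)) (-b) (-a) := by
  intro θ hθ
  have hm : -θ ∈ Ioo a b := ⟨by linarith [hθ.2], by linarith [hθ.1]⟩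
  obtain ⟨hp, hdr, hdr', hode⟩ := hsol (-θ) hm
  refine ⟨hp, ?_, ?_, by simp only []; linear_combination hode⟩
  · have := hdr.comp θ (hasDerivAt_neg θ)
    exact this.congr_deriv (by ring)
  · have := (hdr'.comp θ (hasDerivAt_neg θ)).neg
    exact this.congr_deriv (by ring)

lemma MaximalSolOn.reflect {r r' r'' : ℝ → ℝ} {a b : ℝ} (hmax : MaximalSolOn r r' r'' a b) :
    MaximalSolOn (fun θ => r (-θ)) (fun θ => -r' (-θ)) (fun θ => r'' (-θ)) (-b) (-a) := by
  obtain ⟨hsol, hmx⟩ := hmax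
  refine ⟨hsol.reflect, ?_⟩
  intro a' b' ρ ρ' ρ'' ha' hb' hagr hsolρ
  have hagr' : ∀ θ ∈ Ioo a b, ρ (-θ) = r θ := by
    intro θ hθ
    have : -θ ∈ Ioo (-b) (-a) := ⟨by linarith [hθ.2], by linarith [hθ.1]⟩
    have h := hagr (-θ) this
    simpa using h
  obtain ⟨h1, h2⟩ := hmx (-b') (-a') (fun θ => ρ (-θ)) (fun θ => -ρ' (-θ))
    (fun θ => ρ'' (-θ)) (by linarith) (by linarith) hagr' hsolρ.reflect
  constructor <;> linarith

end Aux

open Set Filter Real Topology in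
/-- A maximal positive solution of `r r'' = r² + 2 r'² + r² (r² + r'²)` on `(a,b)`
tends to `+∞` at both endpoints. -/
theorem stmt11 (a b : ℝ) (hab : a < b) (r r' r'' : ℝ → ℝ)
    (hmax : MaximalSolOn r r' r'' a b) :
    Filter.Tendsto r (nhdsWithin a (Set.Ioi a)) Filter.atTop ∧
      Filter.Tendsto r (nhdsWithin b (Set.Iio b)) Filter.atTop := by
  have hright : Tendsto r (𝓝[<] b) atTop := tendsto_atTop_right hab hmax
  have hrefl := hmax.reflect
  have hleft' : Tendsto (fun θ => r (-θ)) (𝓝[<] (-a)) atTop :=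
    tendsto_atTop_right (by linarith) hrefl
  have hneg : Tendsto (fun θ : ℝ => -θ) (𝓝[>] a) (𝓝[<] (-a)) := by
    apply ContinuousWithinAt.tendsto_nhdsWithin
      (continuous_neg.continuousWithinAt)
    intro x hx
    simpa using (neg_lt_neg hx : -x < -a)
  have hleft : Tendsto r (𝓝[>] a) atTop := by
    have := hleft'.comp hneg
    refine this.congr fun θ => by simp
  exact ⟨hleft, hright⟩
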